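/- Let U : D × [-∞,∞] → [-∞,∞] be such that for each s, x ↦ U(s,x) is non-decreasing and right-continuous, and for each x ∈ ℝ ∪ {∞}, s ↦ U(s,x) is upper semicontinuous. Then for every upper semicontinuous function z : D → [-∞,∞], the function s ↦ U(s, z(s)) is upper semicontinuous. -/

import Mathlib

open Set

/-- Proposition 3.2(ii): if `U ∈ 𝒰(D)` (for each `s`, `x ↦ U(s,x)` is non-decreasing and
right-continuous; for each `x ∈ ℝ ∪ {∞}`, `s ↦ U(s,x)` is upper semicontinuous), then for
every upper semicontinuous `z : D → [-∞,∞]`, the function `s ↦ U(s, z(s))` is upper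
semicontinuous. -/
theorem stmt_8 {N : ℕ} (D : Set (EuclideanSpace ℝ (Fin N))) (hne : D.Nonempty)
    (hlc : LocallyCompactSpace D)
    (U : D → EReal → EReal)
    (hU1 : ∀ s : D, Monotone (U s))
    (hU2 : ∀ s : D, ∀ x : EReal, ContinuousWithinAt (U s) (Ici x) x)
    (hU3 : ∀ x : EReal, x ≠ ⊥ → UpperSemicontinuous (fun s => U s x))
    (z : D → EReal) (hz : UpperSemicontinuous z) :
    UpperSemicontinuous (fun s => U s (z s)) := by
  intro s₀ y hy
  rcases eq_or_lt_of_le (le_top : z s₀ ≤ ⊤) with htop | hlt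
  · -- z s₀ = ⊤
    have h3 := hU3 ⊤ (by simp) s₀ y (by rw [← htop]; exact hy)
    filter_upwards [h3] with s hs
    exact lt_of_le_of_lt (hU1 s le_top) hs
  · -- z s₀ < ⊤ : find x > z s₀ with U s₀ x < y
    have h2 : ∀ᶠ t in nhdsWithin (z s₀) (Ici (z s₀)), U s₀ t < y :=
      (hU2 s₀ (z s₀)).eventually (Iio_mem_nhds hy)
    have h2' : ∀ᶠ t in nhdsWithin (z s₀) (Ioi (z s₀)), U s₀ t < y :=
      h2.filter_mono (nhdsWithin_mono _ Ioi_subset_Ici_self)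
    have hne' : (nhdsWithin (z s₀) (Ioi (z s₀))).NeBot :=
      nhdsGT_neBot_of_exists_gt ⟨⊤, hlt⟩
    obtain ⟨x, hx1, hx2⟩ := (h2'.and self_mem_nhdsWithin).exists
    have hxbot : x ≠ ⊥ := fun h => by simp [h] at hx2
    have hzx : ∀ᶠ s in nhds s₀, z s < x := hz s₀ x hx2
    have hUx : ∀ᶠ s in nhds s₀, U s x < y := hU3 x hxbot s₀ y hx1
    filter_upwards [hzx, hUx] with s h1 h2
    exact lt_of_le_of_lt (hU1 s h1.le) h2
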